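/- Assume p_1 ≤ … ≤ p_n (all p_j > 0) and let α > 0 be a real number. There exists a feasible schedule σ on m machines such that for every j ∈ {1,…,n}: C_j(σ) ≤ ((1+α)/m) Σ_{k=1}^j p_k + ((j−1)/m + 1 + 1/α) s. -/

import Mathlib

open Finset

/-- A feasible schedule on `m` identical machines for `n` jobs with processing
times `p` and uniform setup time `s`.  A part is a tuple
`(machine, job, q, t)`: a piece of length `q > 0` of the job, started at time
`t ≥ 0` and preceded by a setup of length `s`, occupying the machine during
`[t, t + s + q)`. -/
structure Schedule (m n : ℕ) (p : Fin n → ℝ) (s : ℝ) where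
  parts : Finset (Fin m × Fin n × ℝ × ℝ)
  q_pos : ∀ x ∈ parts, 0 < x.2.2.1
  t_nonneg : ∀ x ∈ parts, 0 ≤ x.2.2.2
  sum_q : ∀ j : Fin n,
    ∑ x ∈ parts.filter (fun x => x.2.1 = j), x.2.2.1 = p j
  disj : ∀ x ∈ parts, ∀ y ∈ parts, x ≠ y → x.1 = y.1 →
    x.2.2.2 + s + x.2.2.1 ≤ y.2.2.2 ∨ y.2.2.2 + s + y.2.2.1 ≤ x.2.2.2

namespace Schedule

variable {m n : ℕ} {p : Fin n → ℝ} {s : ℝ}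

/-- The completion time of job `j`: the largest finishing time `t + s + q`
over all parts of job `j` (as a supremum of the finite set of these values). -/
noncomputable def C (σ : Schedule m n p s) (j : Fin n) : ℝ :=
  sSup {r : ℝ | ∃ x ∈ σ.parts, x.2.1 = j ∧ r = x.2.2.2 + s + x.2.2.1}

/-- The total completion time of a schedule. -/
noncomputable def total (σ : Schedule m n p s) : ℝ := ∑ j, σ.C j

end Schedule

namespace Stmt14

attribute [local instance] Classical.propDecidable

variable {m n : ℕ}

abbrev St (m n : ℕ) := (Fin m → ℝ) × Finset (Fin m × Fin n × ℝ × ℝ)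

noncomputable def pick (hm : 0 < m) (loads : Fin m → ℝ) : Fin m :=
  (Finset.exists_min_image Finset.univ loads ⟨⟨0, hm⟩, Finset.mem_univ _⟩).choose

lemma pick_le (hm : 0 < m) (loads : Fin m → ℝ) (i : Fin m) :
    loads (pick hm loads) ≤ loads i :=
  (Finset.exists_min_image Finset.univ loads ⟨⟨0, hm⟩,
    Finset.mem_univ _⟩).choose_spec.2 i (Finset.mem_univ i)

noncomputable def step (hm : 0 < m) (s : ℝ) (q : Fin n → ℝ) (st : St m n) (k : Fin n) : St m n :=
  (Function.update st.1 (pick hm st.1) (st.1 (pick hm st.1) + s + q k),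
    insert (pick hm st.1, k, q k, st.1 (pick hm st.1)) st.2)

noncomputable def greedy (hm : 0 < m) (s : ℝ) (q : Fin n → ℝ) (L : List (Fin n)) : St m n :=
  L.foldl (step hm s q) (fun _ => 0, ∅)

structure Inv (s : ℝ) (q : Fin n → ℝ) (B : Fin n → ℝ) (L : List (Fin n)) (st : St m n) :
    Prop where
  nonneg : ∀ i, 0 ≤ st.1 i
  total : ∑ i, st.1 i = (L.map (fun k => s + q k)).sum
  fin_le : ∀ x ∈ st.2, x.2.2.2 + s + x.2.2.1 ≤ st.1 x.1
  t0 : ∀ x ∈ st.2, 0 ≤ x.2.2.2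
  qeq : ∀ x ∈ st.2, x.2.2.1 = q x.2.1
  sumq : ∀ j, ∑ x ∈ st.2.filter (fun x => x.2.1 = j), x.2.2.1 = (L.count j : ℝ) * q j
  disj : ∀ x ∈ st.2, ∀ y ∈ st.2, x ≠ y → x.1 = y.1 →
    x.2.2.2 + s + x.2.2.1 ≤ y.2.2.2 ∨ y.2.2.2 + s + y.2.2.1 ≤ x.2.2.2
  bound : ∀ x ∈ st.2, x.2.2.2 + s + x.2.2.1 ≤ B x.2.1

lemma inv_step {s : ℝ} (hm : 0 < m) (hs : 0 < s) {q : Fin n → ℝ} (hq : ∀ k, 0 < q k)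
    {B : Fin n → ℝ} {L : List (Fin n)} {st : St m n} {k : Fin n}
    (h : Inv s q B L st)
    (hB : (L.map (fun k' => s + q k')).sum / m + s + q k ≤ B k) :
    Inv s q B (L ++ [k]) (step hm s q st k) := by
  classical
  set i := pick hm st.1 with hi
  have htmin : ∀ i', st.1 i ≤ st.1 i' := fun i' => pick_le hm st.1 i'
  have ht0 : 0 ≤ st.1 i := h.nonneg i
  have htavg : st.1 i ≤ (L.map (fun k' => s + q k')).sum / m := by
    rw [← h.total, le_div_iff₀ (by exact_mod_cast hm)]
    calc st.1 i * m = ∑ _i' : Fin m, st.1 i := by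
          simp [Finset.sum_const, mul_comm]
      _ ≤ ∑ i', st.1 i' := Finset.sum_le_sum (fun i' _ => htmin i')
  have hfresh : (i, k, q k, st.1 i) ∉ st.2 := by
    intro hmem
    have := h.fin_le _ hmem
    simp only at this
    nlinarith [hq k]
  constructor
  · intro i'
    by_cases hii : i' = i
    · subst hii; simp only [step, ← hi, Function.update_self]; nlinarith [hq k]
    · simpa [step, ← hi, Function.update_of_ne hii] using h.nonneg i'
  · have : ∑ x : Fin m, Function.update st.1 i (st.1 i + s + q k) x
        = (st.1 i + s + q k) + ∑ x ∈ Finset.univ \ {i}, st.1 x :=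
      Finset.sum_update_of_mem (Finset.mem_univ i) _ _
    have h2 : ∑ x : Fin m, st.1 x = st.1 i + ∑ x ∈ Finset.univ \ {i}, st.1 x := by
      rw [Finset.sdiff_singleton_eq_erase, ← Finset.add_sum_erase _ _ (Finset.mem_univ i)]
    simp only [step, ← hi, this]
    rw [List.map_append, List.sum_append]
    simp only [List.map_cons, List.map_nil, List.sum_cons, List.sum_nil]
    rw [← h.total, h2]; ring
  · intro x hx
    rcases Finset.mem_insert.mp hx with rfl | hx
    · simp [step, Function.update_self]
    · by_cases hxi : x.1 = i
      · have hle := h.fin_le x hx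
        rw [hxi] at hle
        simp only [step, hxi, ← hi, Function.update_self]
        nlinarith [hq k, hle]
      · simpa [step, ← hi, Function.update_of_ne hxi] using h.fin_le x hx
  · intro x hx
    rcases Finset.mem_insert.mp hx with rfl | hx
    · exact ht0
    · exact h.t0 x hx
  · intro x hx
    rcases Finset.mem_insert.mp hx with rfl | hx
    · rfl
    · exact h.qeq x hx
  · intro j
    simp only [step]
    rw [Finset.filter_insert]
    by_cases hkj : k = j
    · subst hkj
      rw [if_pos rfl, Finset.sum_insert (fun hc => hfresh (Finset.mem_of_mem_filter _ hc))]
      rw [h.sumq k, List.count_append]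
      simp only [List.count_cons, List.count_nil, beq_self_eq_true, if_true]
      push_cast
      ring
    · rw [if_neg (by simpa using hkj), h.sumq j, List.count_append]
      have : List.count j [k] = 0 := by
        simp [List.count_singleton, hkj]
      rw [this]
      push_cast
      ring
  · intro x hx y hy hne hmach
    rcases Finset.mem_insert.mp hx with rfl | hx <;> rcases Finset.mem_insert.mp hy with rfl | hy
    · exact absurd rfl hne
    · right
      have := h.fin_le y hy
      simp only at hmach ⊢
      rw [← hmach] at this
      exact this
    · left
      have := h.fin_le x hx
      simp only at hmach ⊢
      rw [hmach] at this
      exact this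
    · exact h.disj x hx y hy hne hmach
  · intro x hx
    rcases Finset.mem_insert.mp hx with rfl | hx
    · simpa using le_trans (by linarith : st.1 i + s + q k ≤
        (L.map (fun k' => s + q k')).sum / m + s + q k) hB
    · exact h.bound x hx

lemma inv_greedy {s : ℝ} (hm : 0 < m) (hs : 0 < s) {q : Fin n → ℝ} (hq : ∀ k, 0 < q k)
    {B : Fin n → ℝ} (L : List (Fin n))
    (hB : ∀ L1 (k : Fin n) L2, L = L1 ++ k :: L2 →
      (L1.map (fun k' => s + q k')).sum / m + s + q k ≤ B k) :
    Inv s q B L (greedy hm s q L) := by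
  induction L using List.reverseRecOn with
  | nil =>
    constructor <;> simp [greedy]
  | append_singleton L k ih =>
    have hgr : greedy hm s q (L ++ [k]) = step hm s q (greedy hm s q L) k := by
      simp [greedy, List.foldl_append]
    rw [hgr]
    refine inv_step hm hs hq ?_ ?_
    · exact ih (fun L1 k' L2 hsplit => hB L1 k' (L2 ++ [k]) (by rw [hsplit]; simp))
    · exact hB L k [] rfl

lemma count_flatMap_rep (d : Fin n → ℕ) (j : Fin n) :
    ∀ ks : List (Fin n), ks.Nodup →
      ((ks.flatMap fun k => List.replicate (d k) k).count j)
        = if j ∈ ks then d j else 0 := by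
  intro ks
  induction ks with
  | nil => simp
  | cons a t ih =>
    intro hnd
    rw [List.flatMap_cons, List.count_append, ih hnd.of_cons]
    by_cases haj : a = j
    · subst haj
      have : a ∉ t := hnd.notMem
      simp [List.count_replicate, this]
    · simp [List.count_replicate, haj, List.mem_cons, Ne.symm haj]

end Stmt14

/-- With `p` nondecreasing (all `p j > 0`) and `α > 0`,
there is a feasible schedule `σ` on `m` machines with, for every job `j`
(0-indexed):
`C j σ ≤ ((1+α)/m) ∑_{k ≤ j} p k + ((j−1)/m + 1 + 1/α) s`. -/
theorem stmt14 {m n : ℕ} (hm : 0 < m) {p : Fin n → ℝ} (hp : ∀ j, 0 < p j)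
    (hmono : Monotone p) {s : ℝ} (hs : 0 < s) (α : ℝ) (hα : 0 < α) :
    ∃ σ : Schedule m n p s, ∀ j : Fin n,
      σ.C j ≤
        ((1 + α) / (m : ℝ)) * (∑ k ∈ Finset.univ.filter (· ≤ j), p k) +
          (((j : ℕ) : ℝ) / (m : ℝ) + 1 + 1 / α) * s := by
  classical
  have hm' : (0:ℝ) < m := by exact_mod_cast hm
  set d : Fin n → ℕ := fun k => ⌈α * p k / s⌉₊ with hd
  have hd1 : ∀ k, 0 < d k := fun k => Nat.ceil_pos.mpr (div_pos (mul_pos hα (hp k)) hs)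
  have hd0 : ∀ k, (0:ℝ) < d k := fun k => by exact_mod_cast hd1 k
  set q : Fin n → ℝ := fun k => p k / d k with hqdef
  have hq0 : ∀ k, 0 < q k := fun k => div_pos (hp k) (hd0 k)
  have hqs : ∀ k, q k ≤ s / α := by
    intro k
    rw [hqdef]
    simp only
    rw [div_le_div_iff₀ (hd0 k) hα]
    have h1 := Nat.le_ceil (α * p k / s)
    rw [div_le_iff₀ hs] at h1
    nlinarith
  have hds : ∀ k, (d k : ℝ) * s ≤ s + α * p k := by
    intro k
    have h1 := Nat.ceil_lt_add_one (div_pos (mul_pos hα (hp k)) hs).le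
    have h2 : (α * p k / s) * s = α * p k := div_mul_cancel₀ _ hs.ne'
    nlinarith
  have hdq : ∀ k, (d k : ℝ) * q k = p k := fun k => by
    rw [hqdef]; field_simp
    exact mul_div_cancel_left₀ _ (hd0 k).ne'
  set B : Fin n → ℝ := fun j =>
    ((1 + α) / (m : ℝ)) * (∑ k ∈ Finset.univ.filter (· ≤ j), p k) +
      (((j : ℕ) : ℝ) / (m : ℝ) + 1 + 1 / α) * s with hB
  have hB0 : ∀ j, 0 ≤ B j := by
    intro j
    have h1 : 0 ≤ ∑ k ∈ Finset.univ.filter (· ≤ j), p k :=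
      Finset.sum_nonneg fun k _ => (hp k).le
    have h2 : (0:ℝ) ≤ ((j : ℕ) : ℝ) / (m : ℝ) + 1 + 1 / α := by positivity
    have h3 : (0:ℝ) ≤ (1 + α) / (m : ℝ) := by positivity
    rw [hB]
    have := mul_nonneg h3 h1
    have := mul_nonneg h2 hs.le
    simp only
    linarith
  set L : List (Fin n) := (List.finRange n).flatMap (fun k => List.replicate (d k) k) with hL
  have hcount : ∀ j, L.count j = d j := by
    intro j
    rw [hL, Stmt14.count_flatMap_rep d j _ (List.nodup_finRange n),
      if_pos (List.mem_finRange j)]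
  have hsort : L.Pairwise (· ≤ ·) := by
    rw [hL, List.pairwise_flatMap]
    refine ⟨fun a _ => List.pairwise_replicate.mpr (Or.inr le_rfl), ?_⟩
    exact (List.pairwise_lt_finRange n).imp (fun hab x hx y hy => by
      rw [List.eq_of_mem_replicate hx, List.eq_of_mem_replicate hy]; exact hab.le)
  have hIic : ∀ j : Fin n, Finset.univ.filter (· ≤ j)
      = insert j (Finset.univ.filter (· < j)) := by
    intro j
    ext x
    simp only [Finset.mem_filter, Finset.mem_univ, true_and, Finset.mem_insert]
    constructor
    · intro h; rcases lt_or_eq_of_le h with h | h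
      · exact Or.inr h
      · exact Or.inl h
    · rintro (rfl | h)
      · exact le_rfl
      · exact h.le
  have hjfilt : ∀ j : Fin n, j ∉ Finset.univ.filter (· < j) := by
    intro j; simp
  have hcard : ∀ j : Fin n, (Finset.univ.filter (· < j)).card = (j : ℕ) := by
    intro j
    have : Finset.univ.filter (· < j) = Finset.Iio j := by
      ext x; simp
    rw [this, Fin.card_Iio]
  have hkey : ∀ L1 (k : Fin n) L2, L = L1 ++ k :: L2 →
      (L1.map (fun k' => s + q k')).sum / m + s + q k ≤ B k := by
    intro L1 k L2 hsplit
    have hle : ∀ a ∈ L1, a ≤ k := by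
      have hps := hsort
      rw [hsplit, List.pairwise_append] at hps
      exact fun a ha => hps.2.2 a ha k List.mem_cons_self
    have hcL1 : ∀ x, L1.count x ≤ d x := by
      intro x
      have hx := hcount x
      rw [hsplit, List.count_append] at hx
      omega
    have hcL1k : L1.count k + 1 ≤ d k := by
      have hx := hcount k
      rw [hsplit, List.count_append, List.count_cons_self] at hx
      omega
    have hf0 : ∀ x : Fin n, (0:ℝ) ≤ s + q x := fun x => (add_pos hs (hq0 x)).le
    have hsum1 : ((L1.map (fun k' => s + q k')).sum : ℝ)
        ≤ ∑ x ∈ Finset.univ.filter (· < k), (d x : ℝ) * (s + q x)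
            + ((d k : ℝ) - 1) * (s + q k) := by
      rw [Finset.sum_list_map_count]
      have hsub : L1.toFinset ⊆ Finset.univ.filter (· ≤ k) := by
        intro x hx
        simp only [Finset.mem_filter, Finset.mem_univ, true_and]
        exact hle x (List.mem_toFinset.mp hx)
      have step1 : ∑ x ∈ L1.toFinset, (L1.count x) • (s + q x)
          ≤ ∑ x ∈ Finset.univ.filter (· ≤ k), (L1.count x) • (s + q x) := by
        apply Finset.sum_le_sum_of_subset_of_nonneg hsub
        intro x _ _
        exact nsmul_nonneg (hf0 x) _
      have step2 : ∑ x ∈ Finset.univ.filter (· ≤ k), (L1.count x) • (s + q x)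
          ≤ ∑ x ∈ Finset.univ.filter (· ≤ k),
              ((if x = k then d k - 1 else d x : ℕ) : ℝ) * (s + q x) := by
        apply Finset.sum_le_sum
        intro x _
        rw [nsmul_eq_mul]
        apply mul_le_mul_of_nonneg_right _ (hf0 x)
        have hcx : L1.count x ≤ (if x = k then d k - 1 else d x) := by
          by_cases hxk : x = k
          · subst hxk
            rw [if_pos rfl]
            omega
          · rw [if_neg hxk]
            exact hcL1 x
        exact_mod_cast hcx
      have step3 : ∑ x ∈ Finset.univ.filter (· ≤ k),
            ((if x = k then d k - 1 else d x : ℕ) : ℝ) * (s + q x)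
          = ∑ x ∈ Finset.univ.filter (· < k), (d x : ℝ) * (s + q x)
              + ((d k : ℝ) - 1) * (s + q k) := by
        rw [hIic k, Finset.sum_insert (hjfilt k)]
        rw [if_pos rfl, Nat.cast_sub (hd1 k), Nat.cast_one]
        rw [Finset.sum_congr rfl (fun x hx => by
          have hxk : x ≠ k := by
            simp only [Finset.mem_filter] at hx
            exact ne_of_lt hx.2
          rw [if_neg hxk])]
        ring
      calc ∑ x ∈ L1.toFinset, (L1.count x) • (s + q x)
          ≤ ∑ x ∈ Finset.univ.filter (· ≤ k), (L1.count x) • (s + q x) := step1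
        _ ≤ _ := step2
        _ = _ := step3
    have hsum3 : ∑ x ∈ Finset.univ.filter (· < k), (d x : ℝ) * (s + q x)
        ≤ (1 + α) * (∑ x ∈ Finset.univ.filter (· < k), p x) + ((k : ℕ) : ℝ) * s := by
      calc ∑ x ∈ Finset.univ.filter (· < k), (d x : ℝ) * (s + q x)
          ≤ ∑ x ∈ Finset.univ.filter (· < k), ((1 + α) * p x + s) := by
            apply Finset.sum_le_sum
            intro x _
            have h1 := hds x
            have h2 := hdq x
            nlinarith
        _ = (1 + α) * (∑ x ∈ Finset.univ.filter (· < k), p x) + ((k : ℕ) : ℝ) * s := by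
            rw [Finset.sum_add_distrib, ← Finset.mul_sum, Finset.sum_const, hcard k]
            simp [nsmul_eq_mul]
    have hlast : ((d k : ℝ) - 1) * (s + q k) ≤ (1 + α) * p k := by
      have h1 := hds k
      have h2 := hdq k
      have h3 := (hq0 k).le
      nlinarith
    have hnum : ((L1.map (fun k' => s + q k')).sum : ℝ)
        ≤ (1 + α) * (∑ x ∈ Finset.univ.filter (· ≤ k), p x) + ((k : ℕ) : ℝ) * s := by
      have : ∑ x ∈ Finset.univ.filter (· ≤ k), p x
          = p k + ∑ x ∈ Finset.univ.filter (· < k), p x := by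
        rw [hIic k, Finset.sum_insert (hjfilt k)]
      rw [this]
      nlinarith [hsum1, hsum3, hlast]
    have hdiv : ((L1.map (fun k' => s + q k')).sum : ℝ) / m
        ≤ ((1 + α) * (∑ x ∈ Finset.univ.filter (· ≤ k), p x) + ((k : ℕ) : ℝ) * s) / m :=
      div_le_div_of_nonneg_right hnum hm'.le
    have hfin : ((1 + α) * (∑ x ∈ Finset.univ.filter (· ≤ k), p x) + ((k : ℕ) : ℝ) * s) / m
        + s + q k ≤ B k := by
      simp only [hB]
      have hq' := hqs k
      have h1 : ((1 + α) * (∑ x ∈ Finset.univ.filter (· ≤ k), p x) + ((k : ℕ) : ℝ) * s) / m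
          = (1 + α) / m * (∑ x ∈ Finset.univ.filter (· ≤ k), p x) + ((k : ℕ) : ℝ) / m * s := by
        ring
      have h2 : (((k : ℕ) : ℝ) / m + 1 + 1 / α) * s
          = ((k : ℕ) : ℝ) / m * s + s + s / α := by
        ring
      rw [h1, h2]
      linarith
    linarith [hdiv, hfin]
  have hinv := Stmt14.inv_greedy hm hs hq0 L hkey
  refine ⟨⟨(Stmt14.greedy hm s q L).2, ?_, hinv.t0, ?_, hinv.disj⟩, ?_⟩
  · intro x hx
    rw [hinv.qeq x hx]
    exact hq0 _
  · intro j
    rw [hinv.sumq j, hcount j]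
    exact hdq j
  · intro j
    rw [Schedule.C]
    apply Real.sSup_le
    · rintro r ⟨x, hx, hjob, rfl⟩
      have hb := hinv.bound x hx
      rw [hjob] at hb
      exact hb
    · exact hB0 j
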